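/- Let p be stable of degree (n,m) and write L(z,w;η) = Σ_{k=0}^{m−1} a_k(z,w) η̄^k. Then in L²(dσ/|p|²), each a_k is orthogonal to the set {z^i w^j : (i,j) ≰ (n,k) and (i,j) ≱ (n,m)}. -/

import Mathlib

open Complex MeasureTheory Finset
open scoped ComplexInnerProductSpace

noncomputable section

/-- Evaluation of a bivariate polynomial with coefficient array `c i j`,
supported on `0 ≤ i ≤ n`, `0 ≤ j ≤ m`. -/
def evalP (n m : ℕ) (c : ℕ → ℕ → ℂ) (z w : ℂ) : ℂ :=
  ∑ i ∈ Finset.range (n + 1), ∑ j ∈ Finset.range (m + 1), c i j * z ^ i * w ^ j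

/-- `p` is stable: nonvanishing on the closed bidisk. -/
def Stable (n m : ℕ) (c : ℕ → ℕ → ℂ) : Prop :=
  ∀ z w : ℂ, ‖z‖ ≤ 1 → ‖w‖ ≤ 1 → evalP n m c z w ≠ 0

/-- `p` has degree exactly `n` in `z` and `m` in `w`. -/
def DegreeNM (n m : ℕ) (c : ℕ → ℕ → ℂ) : Prop :=
  (∃ j, c n j ≠ 0) ∧ (∃ i, c i m ≠ 0)

/-- Coefficients of the reflected polynomial `p̃(z,w) = zⁿ wᵐ conj (p (1/z̄, 1/w̄))`. -/
def reflC (n m : ℕ) (c : ℕ → ℕ → ℂ) : ℕ → ℕ → ℂ :=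
  fun i j => star (c (n - i) (m - j))

/-- The Laurent monomial `z^i w^j` as a function on the torus, `z = e^{iθ}`, `w = e^{iφ}`. -/
def tmono (i j : ℤ) : ℝ → ℝ → ℂ :=
  fun θ φ => Complex.exp (((i : ℂ) * (θ : ℂ) + (j : ℂ) * (φ : ℂ)) * Complex.I)

/-- A bivariate polynomial as a function on the torus. -/
def onT (n m : ℕ) (c : ℕ → ℕ → ℂ) : ℝ → ℝ → ℂ :=
  fun θ φ => evalP n m c (Complex.exp ((θ : ℂ) * Complex.I)) (Complex.exp ((φ : ℂ) * Complex.I))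

/-- The inner product `⟨f,g⟩ = ∫_{𝕋²} f ḡ dσ/|p|²` of `L²(dσ/|p|²)`. -/
def ip (n m : ℕ) (c : ℕ → ℕ → ℂ) (f g : ℝ → ℝ → ℂ) : ℂ :=
  (1 / (2 * Real.pi) ^ 2 : ℂ) *
    ∫ θ in (0 : ℝ)..(2 * Real.pi), ∫ φ in (0 : ℝ)..(2 * Real.pi),
      f θ φ * star (g θ φ) / ((Complex.normSq (onT n m c θ φ) : ℝ) : ℂ)

/-- Numerator of the Christoffel–Darboux-type kernel `L`:
`zⁿ (p(z,w) conj(p(1/z̄,η)) − p̃(z,w) conj(p̃(1/z̄,η)))`. -/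
def Lnum (n m : ℕ) (c : ℕ → ℕ → ℂ) (z w η : ℂ) : ℂ :=
  z ^ n * (evalP n m c z w * star (evalP n m c (star z)⁻¹ η)
    - evalP n m (reflC n m c) z w * star (evalP n m (reflC n m c) (star z)⁻¹ η))

/-- The kernel built from coefficient arrays `a k` for the polynomials `a_k(z,w)`:
`L(z,w;η) = Σ_{k<m} a_k(z,w) η̄^k`. -/
def Lsum (n m : ℕ) (a : ℕ → ℕ → ℕ → ℂ) (z w η : ℂ) : ℂ :=
  ∑ k ∈ Finset.range m, evalP (2 * n) (m - 1) (a k) z w * (star η) ^ k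

/-- `a` is the coefficient array of the kernel `L` associated with `p`:
`(1 - w η̄) L(z,w;η) = Lnum(z,w;η)` for all `z ≠ 0`. -/
def IsLCoeff (n m : ℕ) (c : ℕ → ℕ → ℂ) (a : ℕ → ℕ → ℕ → ℂ) : Prop :=
  ∀ z w η : ℂ, z ≠ 0 → (1 - w * star η) * Lsum n m a z w η = Lnum n m c z w η

end


noncomputable section
namespace S7

def e (θ : ℝ) : ℂ := Complex.exp (θ * Complex.I)

lemma e_ne (θ : ℝ) : e θ ≠ 0 := Complex.exp_ne_zero _

lemma norm_e (θ : ℝ) : ‖e θ‖ = 1 := by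
  simp [e, Complex.norm_exp]

lemma star_e (θ : ℝ) : star (e θ) = (e θ)⁻¹ := by
  show (starRingEnd ℂ) (Complex.exp _) = _
  rw [← Complex.exp_conj, e, ← Complex.exp_neg]
  congr 1
  simp

lemma diff_evalP_z (n m : ℕ) (c : ℕ → ℕ → ℂ) (w : ℂ) :
    Differentiable ℂ (fun z => evalP n m c z w) := by
  unfold evalP
  exact Differentiable.fun_sum fun i _ => Differentiable.fun_sum fun j _ =>
    ((differentiable_const _).mul (differentiable_pow i)).mul (differentiable_const _)

lemma diff_evalP_w (n m : ℕ) (c : ℕ → ℕ → ℂ) (z : ℂ) :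
    Differentiable ℂ (fun w => evalP n m c z w) := by
  unfold evalP
  exact Differentiable.fun_sum fun i _ => Differentiable.fun_sum fun j _ =>
    (differentiable_const _).mul (differentiable_pow j)

lemma L1 (g : ℂ → ℂ) (hg : ∀ z : ℂ, ‖z‖ ≤ 1 → DifferentiableAt ℂ g z) (N : ℤ) (hN : 1 ≤ N) :
    ∫ θ in (0:ℝ)..(2*Real.pi), (e θ)^N * g (e θ) = 0 := by
  obtain ⟨N', rfl⟩ : ∃ N' : ℕ, N = (N' : ℤ) + 1 := ⟨(N-1).toNat, by omega⟩
  have hd : ∀ z : ℂ, ‖z‖ ≤ 1 → DifferentiableAt ℂ (fun z => z ^ N' * g z) z :=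
    fun z hz => (differentiableAt_pow _).mul (hg z hz)
  have h0 : (∮ z in C(0, 1), z ^ N' * g z) = 0 := by
    apply circleIntegral_eq_zero_of_differentiable_on_off_countable
      (by norm_num : (0:ℝ) ≤ 1) Set.countable_empty
    · intro z hz
      rw [mem_closedBall_zero_iff] at hz
      exact ((hd z hz).continuousAt).continuousWithinAt
    · intro z hz
      rw [Set.diff_empty, mem_ball_zero_iff] at hz
      exact hd z hz.le
  rw [circleIntegral] at h0
  have : ∀ θ : ℝ, deriv (circleMap 0 1) θ • ((circleMap 0 1 θ) ^ N' * g (circleMap 0 1 θ))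
      = Complex.I * ((e θ)^((N':ℤ)+1) * g (e θ)) := by
    intro θ
    have hc : circleMap 0 1 θ = e θ := by simp [circleMap, e]
    rw [deriv_circleMap, hc, smul_eq_mul]
    have : (e θ)^((N':ℤ)+1) = (e θ)^N' * (e θ) := by
      rw [zpow_add₀ (e_ne θ), zpow_natCast, zpow_one]
    rw [this]
    ring
  rw [intervalIntegral.integral_congr (fun θ _ => this θ),
    intervalIntegral.integral_const_mul] at h0
  simpa using h0


variable (n m : ℕ) (c : ℕ → ℕ → ℂ)

def Pt (θ φ : ℝ) : ℂ := evalP n m c (e θ) (e φ)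

lemma cont_ePair : Continuous (fun x : ℝ × ℝ => (e x.1, e x.2)) := by
  apply Continuous.prodMk <;>
  exact Complex.continuous_exp.comp
    ((Complex.continuous_ofReal.comp (by continuity)).mul continuous_const)

lemma cont_evalP : Continuous (fun x : ℂ × ℂ => evalP n m c x.1 x.2) := by
  unfold evalP
  exact continuous_finset_sum _ fun i _ => continuous_finset_sum _ fun j _ =>
    (continuous_const.mul ((continuous_pow i).comp continuous_fst)).mul
      ((continuous_pow j).comp continuous_snd)

lemma cont_Pt : Continuous (fun x : ℝ × ℝ => Pt n m c x.1 x.2) := by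
  have h := (cont_evalP n m c).comp (cont_ePair)
  simpa [Function.comp_def, Pt] using h

lemma Pt_ne (hst : Stable n m c) (θ φ : ℝ) : Pt n m c θ φ ≠ 0 :=
  hst _ _ (norm_e θ).le (norm_e φ).le

lemma swap_int {f : ℝ → ℝ → ℂ} (hf : Continuous (fun x : ℝ × ℝ => f x.1 x.2)) :
    ∫ θ in (0:ℝ)..(2*Real.pi), ∫ φ in (0:ℝ)..(2*Real.pi), f θ φ
      = ∫ φ in (0:ℝ)..(2*Real.pi), ∫ θ in (0:ℝ)..(2*Real.pi), f θ φ := by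
  have h2 : (0:ℝ) ≤ 2*Real.pi := by positivity
  have hint : Integrable (Function.uncurry f)
      ((volume.restrict (Set.Ioc (0:ℝ) (2*Real.pi))).prod
        (volume.restrict (Set.Ioc (0:ℝ) (2*Real.pi)))) := by
    rw [Measure.prod_restrict]
    apply (hf.continuousOn.integrableOn_compact (isCompact_Icc.prod isCompact_Icc)).mono_set
    exact Set.prod_mono Set.Ioc_subset_Icc_self Set.Ioc_subset_Icc_self
  rw [intervalIntegral.integral_of_le h2, intervalIntegral.integral_of_le h2]
  rw [show (fun θ => ∫ φ in (0:ℝ)..(2*Real.pi), f θ φ)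
      = fun θ => ∫ φ in Set.Ioc (0:ℝ) (2*Real.pi), f θ φ from
    funext fun θ => intervalIntegral.integral_of_le h2]
  rw [show (fun φ => ∫ θ in (0:ℝ)..(2*Real.pi), f θ φ)
      = fun φ => ∫ θ in Set.Ioc (0:ℝ) (2*Real.pi), f θ φ from
    funext fun φ => intervalIntegral.integral_of_le h2]
  exact MeasureTheory.integral_integral_swap hint

lemma Jzero (hst : Stable n m c) (N M : ℤ) (h : 1 ≤ N ∨ 1 ≤ M) :
    ∫ θ in (0:ℝ)..(2*Real.pi), ∫ φ in (0:ℝ)..(2*Real.pi),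
      (e θ)^N * (e φ)^M * (Pt n m c θ φ)⁻¹ = 0 := by
  rcases h with hN | hM
  · rw [swap_int (by
      apply Continuous.mul
      apply Continuous.mul
      · exact ((Complex.continuous_exp.comp ((Complex.continuous_ofReal.comp
          continuous_fst).mul continuous_const))).zpow₀ N (fun x => Or.inl (e_ne x.1))
      · exact ((Complex.continuous_exp.comp ((Complex.continuous_ofReal.comp
          continuous_snd).mul continuous_const))).zpow₀ M (fun x => Or.inl (e_ne x.2))
      · exact (cont_Pt n m c).inv₀ (fun x => Pt_ne n m c hst x.1 x.2))]
    have inner : ∀ φ : ℝ, ∫ θ in (0:ℝ)..(2*Real.pi),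
        (e θ)^N * (e φ)^M * (Pt n m c θ φ)⁻¹ = 0 := by
      intro φ
      have : ∀ θ : ℝ, (e θ)^N * (e φ)^M * (Pt n m c θ φ)⁻¹
          = (e φ)^M * ((e θ)^N * (fun z => (evalP n m c z (e φ))⁻¹) (e θ)) := by
        intro θ; simp only [Pt]; ring
      rw [intervalIntegral.integral_congr (fun θ _ => this θ),
        intervalIntegral.integral_const_mul]
      rw [L1 (fun z => (evalP n m c z (e φ))⁻¹) (fun z hz => ((diff_evalP_z n m c (e φ)) z).inv
        (hst z (e φ) hz (norm_e φ).le)) N hN, mul_zero]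
    rw [intervalIntegral.integral_congr (fun φ _ => inner φ)]
    simp
  · have inner : ∀ θ : ℝ, ∫ φ in (0:ℝ)..(2*Real.pi),
        (e θ)^N * (e φ)^M * (Pt n m c θ φ)⁻¹ = 0 := by
      intro θ
      have : ∀ φ : ℝ, (e θ)^N * (e φ)^M * (Pt n m c θ φ)⁻¹
          = (e θ)^N * ((e φ)^M * (fun w => (evalP n m c (e θ) w)⁻¹) (e φ)) := by
        intro φ; simp only [Pt]; ring
      rw [intervalIntegral.integral_congr (fun φ _ => this φ),
        intervalIntegral.integral_const_mul]
      rw [L1 (fun w => (evalP n m c (e θ) w)⁻¹) (fun w hw => ((diff_evalP_w n m c (e θ)) w).inv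
        (hst (e θ) w (norm_e θ).le hw)) M hM, mul_zero]
    rw [intervalIntegral.integral_congr (fun θ _ => inner θ)]
    simp

lemma star_norm_one {u : ℂ} (hu : ‖u‖ = 1) : star u = u⁻¹ := by
  have h : u * star u = 1 := by
    show u * (starRingEnd ℂ) u = 1
    rw [Complex.mul_conj]
    norm_cast
    rw [Complex.normSq_eq_norm_sq, hu]; norm_num
  exact eq_inv_of_mul_eq_one_left (by rwa [mul_comm] at h)

lemma comb {u : ℂ} (hu : u ≠ 0) (a b : ℕ) (d : ℤ) :
    u ^ a * (u⁻¹) ^ b * u ^ (-d) = u ^ ((a:ℤ) - b - d) := by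
  rw [inv_pow, ← zpow_natCast u a, ← zpow_natCast u b, ← zpow_neg, ← zpow_add₀ hu,
    ← zpow_add₀ hu]
  congr 1 <;> ring

def q (nn : ℕ) (cc : ℕ → ℕ → ℂ) (u : ℂ) (l : ℕ) : ℂ :=
  ∑ i' ∈ Finset.range (nn+1), star (cc i' l) * (u⁻¹)^i'

lemma star_evalP_eta (n m : ℕ) (c : ℕ → ℕ → ℂ) (u η : ℂ) :
    star (evalP n m c (star u)⁻¹ η) = ∑ l ∈ Finset.range (m+1), q n c u l * (star η)^l := by
  unfold evalP q
  simp only [star_sum, star_mul', star_pow, star_inv₀, star_star]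
  rw [Finset.sum_comm]
  apply Finset.sum_congr rfl; intro l _
  rw [Finset.sum_mul]

lemma refl_eval (n m : ℕ) (c : ℕ → ℕ → ℂ) {u v : ℂ} (hu : ‖u‖ = 1) (hv : ‖v‖ = 1) :
    evalP n m (reflC n m c) u v = u^n * v^m * star (evalP n m c u v) := by
  have hu0 : u ≠ 0 := fun h => by simp [h] at hu
  have hv0 : v ≠ 0 := fun h => by simp [h] at hv
  have key : ∀ (N : ℕ) (g : ℕ → ℂ), ∑ i ∈ Finset.range (N+1), g (N - i)
      = ∑ i ∈ Finset.range (N+1), g i := by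
    intro N g; have h := Finset.sum_range_reflect g (N+1); simpa using h
  have step1 : evalP n m (reflC n m c) u v
      = ∑ i ∈ Finset.range (n+1), ∑ j ∈ Finset.range (m+1), star (c i j) * u^(n-i) * v^(m-j) := by
    unfold evalP reflC
    rw [← key n (fun i => ∑ j ∈ Finset.range (m+1), star (c i j) * u^(n-i) * v^(m-j))]
    apply Finset.sum_congr rfl; intro i hi
    rw [Finset.mem_range] at hi
    rw [← key m (fun j => star (c (n-i) j) * u^(n-(n-i)) * v^(m-j))]
    apply Finset.sum_congr rfl; intro j hj
    rw [Finset.mem_range] at hj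
    have hi' : n - (n - i) = i := by omega
    have hj' : m - (m - j) = j := by omega
    rw [hi', hj']
  rw [step1]
  unfold evalP
  rw [star_sum, Finset.mul_sum]
  apply Finset.sum_congr rfl; intro i hi
  rw [Finset.mem_range] at hi
  rw [star_sum, Finset.mul_sum]
  apply Finset.sum_congr rfl; intro j hj
  rw [Finset.mem_range] at hj
  simp only [star_mul', star_pow, star_norm_one hu, star_norm_one hv]
  rw [pow_sub₀ u hu0 (by omega : i ≤ n), pow_sub₀ v hv0 (by omega : j ≤ m), inv_pow, inv_pow]
  ring

def Bfun (n m : ℕ) (c : ℕ → ℕ → ℂ) (u v : ℂ) (l : ℕ) : ℂ :=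
  u^n * (evalP n m c u v * q n c u l - evalP n m (reflC n m c) u v * q n (reflC n m c) u l)

lemma Lnum_expand (n m : ℕ) (c : ℕ → ℕ → ℂ) (u v η : ℂ) :
    Lnum n m c u v η = ∑ l ∈ Finset.range (m+1), Bfun n m c u v l * (star η)^l := by
  unfold Lnum Bfun
  rw [star_evalP_eta n m c u η, star_evalP_eta n m (reflC n m c) u η]
  rw [Finset.mul_sum, Finset.mul_sum, ← Finset.sum_sub_distrib, Finset.mul_sum]
  apply Finset.sum_congr rfl; intro l _
  ring

lemma coeffs (m : ℕ) (v : ℂ) (A B : ℕ → ℂ)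
    (h : ∀ x : ℂ, (1 - v * x) * ∑ k' ∈ Finset.range m, A k' * x ^ k'
        = ∑ l ∈ Finset.range (m+1), B l * x ^ l) :
    ∀ k, k < m → A k = ∑ l ∈ Finset.range (k+1), v ^ (k - l) * B l := by
  classical
  set S : Polynomial ℂ := ∑ k' ∈ Finset.range m, Polynomial.C (A k') * Polynomial.X ^ k' with hS
  set R : Polynomial ℂ := ∑ l ∈ Finset.range (m+1), Polynomial.C (B l) * Polynomial.X ^ l with hR
  have hpq : (1 - Polynomial.C v * Polynomial.X) * S = R := by
    apply Polynomial.funext; intro x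
    have hx := h x
    simp only [hS, hR, Polynomial.eval_mul, Polynomial.eval_sub, Polynomial.eval_one,
      Polynomial.eval_finset_sum, Polynomial.eval_C, Polynomial.eval_pow, Polynomial.eval_X]
    exact hx
  have hcS : ∀ k, S.coeff k = if k < m then A k else 0 := by
    intro k
    simp only [hS, Polynomial.finset_sum_coeff, Polynomial.coeff_C_mul, Polynomial.coeff_X_pow,
      mul_ite, mul_one, mul_zero]
    rw [Finset.sum_ite_eq (Finset.range m) k A]
    simp [Finset.mem_range]
  have hcR : ∀ k, k ≤ m → R.coeff k = B k := by
    intro k hk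
    simp only [hR, Polynomial.finset_sum_coeff, Polynomial.coeff_C_mul, Polynomial.coeff_X_pow,
      mul_ite, mul_one, mul_zero]
    rw [Finset.sum_ite_eq (Finset.range (m+1)) k B]
    simp [Finset.mem_range, Nat.lt_succ_iff.mpr hk]
  have hrec : ∀ k, R.coeff k = S.coeff k - v * (if k = 0 then 0 else S.coeff (k-1)) := by
    intro k
    rw [← hpq, one_sub_mul, Polynomial.coeff_sub]
    congr 1
    rw [mul_assoc, Polynomial.coeff_C_mul]
    congr 1
    cases k with
    | zero => rw [mul_comm]; simp [Polynomial.coeff_mul_X_zero]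
    | succ k => simp [Polynomial.coeff_X_mul]
  intro k
  induction k with
  | zero =>
    intro hk
    have h0 := hrec 0
    rw [hcR 0 (by omega), hcS 0, if_pos hk, if_pos rfl, mul_zero, sub_zero] at h0
    simp [← h0]
  | succ k ih =>
    intro hk
    have hks : k < m := by omega
    have h1 := hrec (k+1)
    rw [hcR (k+1) (by omega), hcS (k+1), if_neg (by omega : ¬ k+1 = 0)] at h1
    simp only [Nat.add_sub_cancel, hcS k, if_pos hks] at h1
    rw [if_pos hk] at h1
    have hA : A (k+1) = B (k+1) + v * A k := by rw [h1]; ring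
    rw [Finset.sum_range_succ, hA, ih hks, Finset.mul_sum, Nat.sub_self, pow_zero, one_mul,
      add_comm]
    congr 1
    apply Finset.sum_congr rfl; intro l hl
    rw [Finset.mem_range] at hl
    rw [← mul_assoc, ← pow_succ']
    congr 2
    omega

lemma A_formula (n m : ℕ) (c : ℕ → ℕ → ℂ) (a : ℕ → ℕ → ℕ → ℂ)
    (ha : IsLCoeff n m c a) (u v : ℂ) (hu : u ≠ 0) :
    ∀ k, k < m → evalP (2*n) (m-1) (a k) u v
      = ∑ l ∈ Finset.range (k+1), v ^ (k-l) * Bfun n m c u v l := by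
  apply coeffs
  intro x
  have h := ha u v (star x) hu
  rw [Lnum_expand] at h
  simpa [Lsum, star_star] using h

lemma term_eq {u v P : ℂ} (hu : u ≠ 0) (hv : v ≠ 0) (hP : P ≠ 0)
    (n m k l i' : ℕ) (i j : ℤ) (hl : l ≤ k) (c1 c2 : ℂ) :
    u^(-i) * v^(-j) * (v^(k-l) * (u^n * (P * (c1 * (u⁻¹)^i')
        - u^n * v^m * star P * (c2 * (u⁻¹)^i')))) * (P⁻¹ * (star P)⁻¹)
    = c1 * (u^((n:ℤ) - (i':ℕ) - i) * v^((k:ℤ) - (l:ℕ) - j) * (star P)⁻¹)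
      - c2 * (u^(((2*n:ℕ):ℤ) - (i':ℕ) - i) * v^(((m+k:ℕ):ℤ) - (l:ℕ) - j) * P⁻¹) := by
  have hsP : star P ≠ 0 := star_ne_zero.mpr hP
  rw [← comb hu n i' i, ← comb hu (2*n) i' i, ← comb hv k l j, ← comb hv (m+k) l j]
  rw [pow_sub₀ v hv hl, ← inv_pow]
  linear_combination (c1 * (u^(-i) * v^(-j)) * (v^k * (v⁻¹)^l) * (u^n * (u⁻¹)^i')
      * (star P)⁻¹) * (mul_inv_cancel₀ hP)
    - (c2 * (u^(-i) * v^(-j)) * (v^k * (v⁻¹)^l) * v^m * (u^(2*n) * (u⁻¹)^i') * P⁻¹)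
      * (mul_inv_cancel₀ hsP)

lemma exp_zpow (N : ℤ) (θ : ℝ) : Complex.exp ((N:ℂ) * ((θ:ℂ) * Complex.I)) = (e θ)^N := by
  rw [e, ← Complex.exp_int_mul]

lemma star_tmono (i j : ℤ) (θ φ : ℝ) :
    star (tmono i j θ φ) = (e θ)^(-i) * (e φ)^(-j) := by
  unfold tmono
  rw [show ((i:ℂ)*(θ:ℂ) + (j:ℂ)*(φ:ℂ))*Complex.I
      = (i:ℂ)*((θ:ℂ)*Complex.I) + (j:ℂ)*((φ:ℂ)*Complex.I) by ring]
  rw [Complex.exp_add, star_mul']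
  rw [← exp_zpow (-i) θ, ← exp_zpow (-j) φ]
  congr 1 <;>
  · show (starRingEnd ℂ) (Complex.exp _) = _
    rw [← Complex.exp_conj]
    congr 1
    rw [map_mul, map_mul, Complex.conj_I, Complex.conj_ofReal, map_intCast]
    push_cast
    ring

lemma pointwise (hst : Stable n m c) (a : ℕ → ℕ → ℕ → ℂ)
    (ha : IsLCoeff n m c a) (k : ℕ) (hk : k < m) (i j : ℤ) (θ φ : ℝ) :
    star (tmono i j θ φ * star (onT (2 * n) (m - 1) (a k) θ φ)
        / ((Complex.normSq (onT n m c θ φ) : ℝ) : ℂ))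
      = ∑ l ∈ Finset.range (k+1), ∑ i' ∈ Finset.range (n+1),
        (star (c i' l) * ((e θ)^((n:ℤ) - (i':ℕ) - i) * (e φ)^((k:ℤ) - (l:ℕ) - j)
            * (star (Pt n m c θ φ))⁻¹)
         - c (n-i') (m-l) * ((e θ)^(((2*n:ℕ):ℤ) - (i':ℕ) - i)
            * (e φ)^(((m+k:ℕ):ℤ) - (l:ℕ) - j) * (Pt n m c θ φ)⁻¹)) := by
  have hu0 := e_ne θ
  have hv0 := e_ne φ
  have hP : Pt n m c θ φ ≠ 0 := Pt_ne n m c hst θ φ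
  have hsP : star (Pt n m c θ φ) ≠ 0 := star_ne_zero.mpr hP
  have hPe : evalP n m c (e θ) (e φ) = Pt n m c θ φ := rfl
  have stepA : star (tmono i j θ φ * star (onT (2 * n) (m - 1) (a k) θ φ)
        / ((Complex.normSq (onT n m c θ φ) : ℝ) : ℂ))
      = ((e θ)^(-i) * (e φ)^(-j)) * ((∑ l ∈ Finset.range (k+1),
          (e φ)^(k-l) * Bfun n m c (e θ) (e φ) l)
        * ((Pt n m c θ φ)⁻¹ * (star (Pt n m c θ φ))⁻¹)) := by
    have h1 : onT (2 * n) (m - 1) (a k) θ φ = evalP (2*n) (m-1) (a k) (e θ) (e φ) := rfl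
    have h2 : onT n m c θ φ = Pt n m c θ φ := rfl
    rw [h1, h2, star_div₀, star_mul', star_star, star_tmono]
    rw [show star ((((Complex.normSq (Pt n m c θ φ)) : ℝ)) : ℂ)
        = (((Complex.normSq (Pt n m c θ φ)) : ℝ) : ℂ) from Complex.conj_ofReal _]
    rw [show ((((Complex.normSq (Pt n m c θ φ)) : ℝ)) : ℂ)
        = Pt n m c θ φ * star (Pt n m c θ φ) from (Complex.mul_conj _).symm]
    rw [A_formula n m c a ha (e θ) (e φ) hu0 k hk]
    rw [div_eq_mul_inv, mul_inv]
    ring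
  rw [stepA]
  rw [Finset.sum_mul, Finset.mul_sum]
  apply Finset.sum_congr rfl; intro l hl
  rw [Finset.mem_range] at hl
  simp only [Bfun, q, reflC, star_star,
    refl_eval n m c (norm_e θ) (norm_e φ), hPe,
    Finset.mul_sum, Finset.sum_mul, mul_sub, sub_mul, ← Finset.sum_sub_distrib]
  apply Finset.sum_congr rfl; intro i' hi'
  rw [Finset.mem_range] at hi'
  rw [← comb hu0 n i' i, ← comb hu0 (2*n) i' i, ← comb hv0 k l j, ← comb hv0 (m+k) l j,
    pow_sub₀ (e φ) hv0 (by omega : l ≤ k), ← inv_pow]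
  linear_combination (star (c i' l) * ((e θ)^(-i) * (e φ)^(-j)) * ((e φ)^k * ((e φ)⁻¹)^l)
      * ((e θ)^n * ((e θ)⁻¹)^i') * (star (Pt n m c θ φ))⁻¹) * (mul_inv_cancel₀ hP)
    - (c (n-i') (m-l) * ((e θ)^(-i) * (e φ)^(-j)) * ((e φ)^k * ((e φ)⁻¹)^l) * (e φ)^m
      * ((e θ)^(2*n) * ((e θ)⁻¹)^i') * (Pt n m c θ φ)⁻¹) * (mul_inv_cancel₀ hsP)

lemma iconj {f : ℝ → ℂ} {a b : ℝ} :
    (∫ x in a..b, star (f x)) = star (∫ x in a..b, f x) := by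
  show (∫ x in a..b, (starRingEnd ℂ) (f x)) = (starRingEnd ℂ) (∫ x in a..b, f x)
  rw [intervalIntegral, intervalIntegral, integral_conj, integral_conj, ← map_sub]

lemma iint_star (f : ℝ → ℝ → ℂ) :
    (∫ θ in (0:ℝ)..(2*Real.pi), ∫ φ in (0:ℝ)..(2*Real.pi), star (f θ φ))
      = star (∫ θ in (0:ℝ)..(2*Real.pi), ∫ φ in (0:ℝ)..(2*Real.pi), f θ φ) := by
  rw [intervalIntegral.integral_congr (fun θ _ => iconj (f := fun φ => f θ φ))]
  exact iconj

lemma cont_e : Continuous (fun θ : ℝ => e θ) :=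
  Complex.continuous_exp.comp (Complex.continuous_ofReal.mul continuous_const)

lemma contG (hst : Stable n m c) (N M : ℤ) :
    Continuous (fun x : ℝ × ℝ => (e x.1)^N * (e x.2)^M * (Pt n m c x.1 x.2)⁻¹) := by
  apply Continuous.mul
  apply Continuous.mul
  · exact (cont_e.comp continuous_fst).zpow₀ N (fun x => Or.inl (e_ne x.1))
  · exact (cont_e.comp continuous_snd).zpow₀ M (fun x => Or.inl (e_ne x.2))
  · exact (cont_Pt n m c).inv₀ (fun x => Pt_ne n m c hst x.1 x.2)

lemma contGs (hst : Stable n m c) (N M : ℤ) :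
    Continuous (fun x : ℝ × ℝ => (e x.1)^N * (e x.2)^M * (star (Pt n m c x.1 x.2))⁻¹) := by
  apply Continuous.mul
  apply Continuous.mul
  · exact (cont_e.comp continuous_fst).zpow₀ N (fun x => Or.inl (e_ne x.1))
  · exact (cont_e.comp continuous_snd).zpow₀ M (fun x => Or.inl (e_ne x.2))
  · exact (continuous_star.comp (cont_Pt n m c)).inv₀
      (fun x => star_ne_zero.mpr (Pt_ne n m c hst x.1 x.2))

lemma Jzero_star (hst : Stable n m c) (N M : ℤ) (h : N ≤ -1 ∨ M ≤ -1) :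
    (∫ θ in (0:ℝ)..(2*Real.pi), ∫ φ in (0:ℝ)..(2*Real.pi),
      (e θ)^N * (e φ)^M * (star (Pt n m c θ φ))⁻¹) = 0 := by
  have key : ∀ θ φ : ℝ, (e θ)^N * (e φ)^M * (star (Pt n m c θ φ))⁻¹
      = star ((e θ)^(-N) * (e φ)^(-M) * (Pt n m c θ φ)⁻¹) := by
    intro θ φ
    rw [star_mul', star_mul', star_inv₀, star_zpow₀, star_zpow₀, star_e, star_e]
    rw [inv_zpow, inv_zpow, zpow_neg, zpow_neg, inv_inv, inv_inv]
  rw [intervalIntegral.integral_congr (fun θ _ => intervalIntegral.integral_congr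
    (fun φ _ => key θ φ))]
  rw [iint_star]
  rw [Jzero n m c hst (-N) (-M) (by omega), star_zero]

end S7

namespace S7

variable (n m : ℕ) (c : ℕ → ℕ → ℂ)

lemma iint_sum (s : Finset (ℕ × ℕ)) (f : ℕ × ℕ → ℝ → ℝ → ℂ)
    (hf : ∀ l ∈ s, Continuous (fun x : ℝ × ℝ => f l x.1 x.2)) :
    (∫ θ in (0:ℝ)..(2*Real.pi), ∫ φ in (0:ℝ)..(2*Real.pi), ∑ l ∈ s, f l θ φ)
      = ∑ l ∈ s, ∫ θ in (0:ℝ)..(2*Real.pi), ∫ φ in (0:ℝ)..(2*Real.pi), f l θ φ := by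
  rw [intervalIntegral.integral_congr (g := fun θ => ∑ l ∈ s,
      ∫ φ in (0:ℝ)..(2*Real.pi), f l θ φ)
    (fun θ _ => intervalIntegral.integral_finset_sum
      (fun l hl => ((hf l hl).comp (Continuous.prodMk_right θ)).intervalIntegrable _ _))]
  exact intervalIntegral.integral_finset_sum (fun l hl =>
    (intervalIntegral.continuous_parametric_intervalIntegral_of_continuous'
      (hf l hl) 0 (2*Real.pi)).intervalIntegrable _ _)

lemma iint_const_mul (cc : ℂ) (f : ℝ → ℝ → ℂ) :
    (∫ θ in (0:ℝ)..(2*Real.pi), ∫ φ in (0:ℝ)..(2*Real.pi), cc * f θ φ)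
      = cc * ∫ θ in (0:ℝ)..(2*Real.pi), ∫ φ in (0:ℝ)..(2*Real.pi), f θ φ := by
  rw [← intervalIntegral.integral_const_mul]
  exact intervalIntegral.integral_congr
    (fun θ _ => intervalIntegral.integral_const_mul cc (fun φ => f θ φ))

lemma iint_sub (f g : ℝ → ℝ → ℂ) (hf : Continuous (fun x : ℝ × ℝ => f x.1 x.2))
    (hg : Continuous (fun x : ℝ × ℝ => g x.1 x.2)) :
    (∫ θ in (0:ℝ)..(2*Real.pi), ∫ φ in (0:ℝ)..(2*Real.pi), (f θ φ - g θ φ))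
      = (∫ θ in (0:ℝ)..(2*Real.pi), ∫ φ in (0:ℝ)..(2*Real.pi), f θ φ)
        - ∫ θ in (0:ℝ)..(2*Real.pi), ∫ φ in (0:ℝ)..(2*Real.pi), g θ φ := by
  rw [intervalIntegral.integral_congr (g := fun θ =>
      (∫ φ in (0:ℝ)..(2*Real.pi), f θ φ) - ∫ φ in (0:ℝ)..(2*Real.pi), g θ φ)
    (fun θ _ => intervalIntegral.integral_sub
      ((hf.comp (Continuous.prodMk_right θ)).intervalIntegrable _ _)
      ((hg.comp (Continuous.prodMk_right θ)).intervalIntegrable _ _))]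
  exact intervalIntegral.integral_sub
    ((intervalIntegral.continuous_parametric_intervalIntegral_of_continuous'
      hf 0 (2*Real.pi)).intervalIntegrable _ _)
    ((intervalIntegral.continuous_parametric_intervalIntegral_of_continuous'
      hg 0 (2*Real.pi)).intervalIntegrable _ _)

end S7



/-- each a_k is orthogonal to {z^i w^j : (i,j) ≰ (n,k) and (i,j) ≱ (n,m)}. -/
theorem statement7 (n m : ℕ) (c : ℕ → ℕ → ℂ)
    (hstable : Stable n m c) (hdeg : DegreeNM n m c)
    (a : ℕ → ℕ → ℕ → ℂ) (ha : IsLCoeff n m c a)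
    (k : ℕ) (hk : k < m) (i j : ℤ)
    (h1 : ¬(i ≤ (n : ℤ) ∧ j ≤ (k : ℤ)))
    (h2 : ¬((n : ℤ) ≤ i ∧ (m : ℤ) ≤ j)) :
    ip n m c (tmono i j) (onT (2 * n) (m - 1) (a k)) = 0 := by
  classical
  set F : ℕ × ℕ → ℝ → ℝ → ℂ := fun p θ φ =>
    star (c p.2 p.1) * ((S7.e θ)^((n:ℤ) - (p.2:ℕ) - i) * (S7.e φ)^((k:ℤ) - (p.1:ℕ) - j)
        * (star (S7.Pt n m c θ φ))⁻¹)
      - c (n-p.2) (m-p.1) * ((S7.e θ)^(((2*n:ℕ):ℤ) - (p.2:ℕ) - i)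
        * (S7.e φ)^(((m+k:ℕ):ℤ) - (p.1:ℕ) - j) * (S7.Pt n m c θ φ)⁻¹) with hF
  have key : (∫ θ in (0:ℝ)..(2*Real.pi), ∫ φ in (0:ℝ)..(2*Real.pi),
      tmono i j θ φ * star (onT (2 * n) (m - 1) (a k) θ φ)
        / ((Complex.normSq (onT n m c θ φ) : ℝ) : ℂ)) = 0 := by
    rw [← star_eq_zero, ← S7.iint_star]
    have hpt : ∀ θ φ : ℝ, star (tmono i j θ φ * star (onT (2 * n) (m - 1) (a k) θ φ)
        / ((Complex.normSq (onT n m c θ φ) : ℝ) : ℂ))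
        = ∑ p ∈ Finset.range (k+1) ×ˢ Finset.range (n+1), F p θ φ := by
      intro θ φ
      rw [S7.pointwise n m c hstable a ha k hk i j θ φ]
      rw [Finset.sum_product]
    rw [intervalIntegral.integral_congr (fun θ _ => intervalIntegral.integral_congr
      (fun φ _ => hpt θ φ))]
    rw [S7.iint_sum _ F ?hcont]
    case hcont =>
      intro p _
      apply Continuous.sub
      · exact continuous_const.mul (S7.contGs n m c hstable _ _)
      · exact continuous_const.mul (S7.contG n m c hstable _ _)
    apply Finset.sum_eq_zero
    intro p hp
    rw [Finset.mem_product, Finset.mem_range, Finset.mem_range] at hp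
    obtain ⟨hl, hi'⟩ := hp
    rw [hF]
    have hsub : (∫ θ in (0:ℝ)..(2*Real.pi), ∫ φ in (0:ℝ)..(2*Real.pi),
        (star (c p.2 p.1) * ((S7.e θ)^((n:ℤ) - (p.2:ℕ) - i) * (S7.e φ)^((k:ℤ) - (p.1:ℕ) - j)
          * (star (S7.Pt n m c θ φ))⁻¹)
        - c (n-p.2) (m-p.1) * ((S7.e θ)^(((2*n:ℕ):ℤ) - (p.2:ℕ) - i)
          * (S7.e φ)^(((m+k:ℕ):ℤ) - (p.1:ℕ) - j) * (S7.Pt n m c θ φ)⁻¹)))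
        = (∫ θ in (0:ℝ)..(2*Real.pi), ∫ φ in (0:ℝ)..(2*Real.pi),
            star (c p.2 p.1) * ((S7.e θ)^((n:ℤ) - (p.2:ℕ) - i) * (S7.e φ)^((k:ℤ) - (p.1:ℕ) - j)
              * (star (S7.Pt n m c θ φ))⁻¹))
          - (∫ θ in (0:ℝ)..(2*Real.pi), ∫ φ in (0:ℝ)..(2*Real.pi),
            c (n-p.2) (m-p.1) * ((S7.e θ)^(((2*n:ℕ):ℤ) - (p.2:ℕ) - i)
              * (S7.e φ)^(((m+k:ℕ):ℤ) - (p.1:ℕ) - j) * (S7.Pt n m c θ φ)⁻¹)) :=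
      S7.iint_sub _ _ (continuous_const.mul (S7.contGs n m c hstable _ _))
        (continuous_const.mul (S7.contG n m c hstable _ _))
    rw [hsub, S7.iint_const_mul, S7.iint_const_mul]
    rw [S7.Jzero_star n m c hstable _ _ (by omega),
      S7.Jzero n m c hstable _ _ (by omega)]
    simp
  unfold ip
  rw [key, mul_zero]
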